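/- Let φ(x,y,u) = u(1−y) − x²/2 on ℝ³, and define the polynomial vector fields e₁ = (1−y)∂ₓ + x∂ᵤ, e₂ = (1−y)∂_y + u∂ᵤ, e₃ = x∂ₓ + 2u∂ᵤ, e₄ = −u∂ₓ + x∂_y on ℝ³. Then identically on ℝ³: e₁(φ) = 0, e₂(φ) = 0, e₃(φ) = 2φ, e₄(φ) = 0. In particular all four vector fields are tangent to the surface {φ = 0} at every point of {φ = 0}. -/

import Mathlib

/-- `φ(x,y,u) = u(1−y) − x²/2`. -/
noncomputable def phiFlat : ℝ × ℝ × ℝ → ℝ := fun p => p.2.2 * (1 - p.2.1) - p.1 ^ 2 / 2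

/-- `e₁ = (1−y)∂ₓ + x∂ᵤ`. -/
noncomputable def e1Flat : ℝ × ℝ × ℝ → ℝ × ℝ × ℝ := fun p => (1 - p.2.1, 0, p.1)

/-- `e₂ = (1−y)∂_y + u∂ᵤ`. -/
noncomputable def e2Flat : ℝ × ℝ × ℝ → ℝ × ℝ × ℝ := fun p => (0, 1 - p.2.1, p.2.2)

/-- `e₃ = x∂ₓ + 2u∂ᵤ`. -/
noncomputable def e3Flat : ℝ × ℝ × ℝ → ℝ × ℝ × ℝ := fun p => (p.1, 0, 2 * p.2.2)

/-- `e₄ = −u∂ₓ + x∂_y`. -/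
noncomputable def e4Flat : ℝ × ℝ × ℝ → ℝ × ℝ × ℝ := fun p => (-p.2.2, p.1, 0)

lemma phiFlat_fderiv (p v : ℝ × ℝ × ℝ) :
    fderiv ℝ phiFlat p v = v.2.2 * (1 - p.2.1) - p.2.2 * v.2.1 - p.1 * v.1 := by
  have hx : HasFDerivAt (fun q : ℝ × ℝ × ℝ => q.1) (ContinuousLinearMap.fst ℝ ℝ (ℝ × ℝ)) p :=
    hasFDerivAt_fst
  have hy := (hasFDerivAt_snd (𝕜 := ℝ) (p := p) (E := ℝ) (F := ℝ × ℝ)).fst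
  have hu := (hasFDerivAt_snd (𝕜 := ℝ) (p := p) (E := ℝ) (F := ℝ × ℝ)).snd
  have h0 := (hu.mul (hy.const_sub 1)).sub ((hx.mul hx).const_mul (2⁻¹ : ℝ))
  have hfun : phiFlat = fun q : ℝ × ℝ × ℝ => q.2.2 * (1 - q.2.1) - 2⁻¹ * (q.1 * q.1) := by
    funext q; simp only [phiFlat]; ring
  rw [hfun, HasFDerivAt.fderiv (f := fun q : ℝ × ℝ × ℝ => q.2.2 * (1 - q.2.1) - 2⁻¹ * (q.1 * q.1)) h0]
  simp
  ring

/-- Identically on `ℝ³`: `e₁(φ) = 0`, `e₂(φ) = 0`, `e₃(φ) = 2φ`, `e₄(φ) = 0`; in particular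
all four vector fields are tangent to `{φ = 0}` at every point of `{φ = 0}`. -/
theorem flat_model_tangency :
    (∀ p : ℝ × ℝ × ℝ,
      fderiv ℝ phiFlat p (e1Flat p) = 0 ∧
      fderiv ℝ phiFlat p (e2Flat p) = 0 ∧
      fderiv ℝ phiFlat p (e3Flat p) = 2 * phiFlat p ∧
      fderiv ℝ phiFlat p (e4Flat p) = 0) ∧
    (∀ p : ℝ × ℝ × ℝ, phiFlat p = 0 →
      fderiv ℝ phiFlat p (e1Flat p) = 0 ∧
      fderiv ℝ phiFlat p (e2Flat p) = 0 ∧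
      fderiv ℝ phiFlat p (e3Flat p) = 0 ∧
      fderiv ℝ phiFlat p (e4Flat p) = 0) := by
  have key : ∀ p : ℝ × ℝ × ℝ,
      fderiv ℝ phiFlat p (e1Flat p) = 0 ∧
      fderiv ℝ phiFlat p (e2Flat p) = 0 ∧
      fderiv ℝ phiFlat p (e3Flat p) = 2 * phiFlat p ∧
      fderiv ℝ phiFlat p (e4Flat p) = 0 := by
    intro p
    refine ⟨?_, ?_, ?_, ?_⟩ <;>
      rw [phiFlat_fderiv] <;>
      simp only [phiFlat, e1Flat, e2Flat, e3Flat, e4Flat] <;> ring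
  refine ⟨key, fun p hp => ?_⟩
  obtain ⟨h1, h2, h3, h4⟩ := key p
  exact ⟨h1, h2, by rw [h3, hp, mul_zero], h4⟩
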